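/- Let A and B be unital algebras, H a Hopf algebra with a symmetric partial action on A, and (φ, π) a covariant pair with values in B. Then there exists a unique algebra morphism Φ : A#H → B such that φ = Φ∘φ₀ and π = Φ∘π₀, where φ₀(a) = a#1_H and π₀(h) = 1_A#h. Explicitly Φ(a#h) = φ(a)π(h). -/
import Mathlib


open TensorProduct BigOperators HopfAlgebra

variable (k : Type) [CommRing k]

/-- A partial representation of a Hopf algebra `H` on an algebra `B` (axioms (PR1)-(PR5)),
stated using arbitrary finite Sweedler decompositions of the comultiplication. -/
def IsPartialRep {H : Type} [Ring H] [HopfAlgebra k H]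
    {B : Type} [Ring B] [Algebra k B] (π : H →ₗ[k] B) : Prop :=
  -- (PR1)
  π 1 = 1 ∧
  -- (PR2) : π(h)π(x₍₁₎)π(S(x₍₂₎)) = π(h x₍₁₎)π(S(x₍₂₎))
  (∀ (h x : H) (n : ℕ) (x1 x2 : Fin n → H),
    Coalgebra.comul (R := k) x = ∑ i, x1 i ⊗ₜ[k] x2 i →
    π h * ∑ i, π (x1 i) * π (antipode (R := k) (x2 i)) =
      ∑ i, π (h * x1 i) * π (antipode (R := k) (x2 i))) ∧
  -- (PR3) : π(h₍₁₎)π(S(h₍₂₎))π(x) = π(h₍₁₎)π(S(h₍₂₎) x)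
  (∀ (h x : H) (n : ℕ) (h1 h2 : Fin n → H),
    Coalgebra.comul (R := k) h = ∑ i, h1 i ⊗ₜ[k] h2 i →
    (∑ i, π (h1 i) * π (antipode (R := k) (h2 i))) * π x =
      ∑ i, π (h1 i) * π (antipode (R := k) (h2 i) * x)) ∧
  -- (PR4) : π(h)π(S(x₍₁₎))π(x₍₂₎) = π(h S(x₍₁₎))π(x₍₂₎)
  (∀ (h x : H) (n : ℕ) (x1 x2 : Fin n → H),
    Coalgebra.comul (R := k) x = ∑ i, x1 i ⊗ₜ[k] x2 i →
    π h * ∑ i, π (antipode (R := k) (x1 i)) * π (x2 i) =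
      ∑ i, π (h * antipode (R := k) (x1 i)) * π (x2 i)) ∧
  -- (PR5) : π(S(h₍₁₎))π(h₍₂₎)π(x) = π(S(h₍₁₎))π(h₍₂₎ x)
  (∀ (h x : H) (n : ℕ) (h1 h2 : Fin n → H),
    Coalgebra.comul (R := k) h = ∑ i, h1 i ⊗ₜ[k] h2 i →
    (∑ i, π (antipode (R := k) (h1 i)) * π (h2 i)) * π x =
      ∑ i, π (antipode (R := k) (h1 i)) * π (h2 i * x))

variable {k}
variable {H : Type} [Ring H] [HopfAlgebra k H]
variable {A : Type} [Ring A] [Algebra k A]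

/-- The map `H ⊗ A → A ⊗ H`, `h ⊗ b ↦ ∑ (h₍₁₎·b) ⊗ h₍₂₎`, for an action `act`. -/
noncomputable def smashHalf (act : H →ₗ[k] Module.End k A) : H ⊗[k] A →ₗ[k] A ⊗[k] H :=
  (TensorProduct.map (TensorProduct.lift (act : H →ₗ[k] A →ₗ[k] A)) LinearMap.id) ∘ₗ
    (TensorProduct.assoc k H A H).symm.toLinearMap ∘ₗ
    (TensorProduct.map LinearMap.id (TensorProduct.comm k H A).toLinearMap) ∘ₗ
    (TensorProduct.assoc k H H A).toLinearMap ∘ₗ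
    (TensorProduct.map (Coalgebra.comul (R := k)) LinearMap.id)

/-- The smash multiplication on `A ⊗ H`: `(a ⊗ h)(b ⊗ x) = ∑ a(h₍₁₎·b) ⊗ h₍₂₎x`. -/
noncomputable def smashMul (act : H →ₗ[k] Module.End k A) :
    (A ⊗[k] H) →ₗ[k] (A ⊗[k] H) →ₗ[k] (A ⊗[k] H) :=
  TensorProduct.curry <|
    (TensorProduct.map (LinearMap.mul' k A) LinearMap.id) ∘ₗ
    (TensorProduct.assoc k A A H).symm.toLinearMap ∘ₗ
    (TensorProduct.map LinearMap.id
      ((TensorProduct.map LinearMap.id (LinearMap.mul' k H)) ∘ₗ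
        (TensorProduct.assoc k A H H).toLinearMap ∘ₗ
        (TensorProduct.map (smashHalf act) LinearMap.id) ∘ₗ
        (TensorProduct.assoc k H A H).symm.toLinearMap)) ∘ₗ
    (TensorProduct.assoc k A H (A ⊗[k] H)).toLinearMap

/-- The element `a # h := (a ⊗ h)(1_A ⊗ 1_H)` of the partial smash product. -/
noncomputable def sharp (act : H →ₗ[k] Module.End k A) (a : A) (h : H) : A ⊗[k] H :=
  smashMul act (a ⊗ₜ[k] h) ((1 : A) ⊗ₜ[k] (1 : H))


section AuxUniversal

theorem comul_exists_repr (h : H) : ∃ (n : ℕ) (h1 h2 : Fin n → H),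
    Coalgebra.comul (R := k) h = ∑ i, h1 i ⊗ₜ[k] h2 i := by
  obtain ⟨S, hS⟩ := TensorProduct.exists_finset (Coalgebra.comul (R := k) h)
  refine ⟨S.card, fun i => (S.equivFin.symm i).1.1, fun i => (S.equivFin.symm i).1.2, ?_⟩
  rw [hS, ← Finset.sum_coe_sort S (fun p => p.1 ⊗ₜ[k] p.2),
    ← Equiv.sum_comp S.equivFin.symm (fun p => (p : H × H).1 ⊗ₜ[k] (p : H × H).2)]

set_option maxHeartbeats 1000000 in
set_option synthInstance.maxHeartbeats 400000 in
theorem smashHalf_tmul (act : H →ₗ[k] Module.End k A) (c : A) (h : H)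
    {n : ℕ} {h1 h2 : Fin n → H} (hc : Coalgebra.comul (R := k) h = ∑ i, h1 i ⊗ₜ[k] h2 i) :
    smashHalf act (h ⊗ₜ[k] c) = ∑ i, act (h1 i) c ⊗ₜ[k] h2 i := by
  simp only [smashHalf, LinearMap.coe_comp, LinearEquiv.coe_coe, Function.comp_apply,
    TensorProduct.map_tmul, LinearMap.id_coe, id_eq, hc, TensorProduct.sum_tmul, map_sum,
    TensorProduct.assoc_tmul, TensorProduct.comm_tmul, TensorProduct.assoc_symm_tmul,
    TensorProduct.lift.tmul]

set_option maxHeartbeats 1000000 in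
set_option synthInstance.maxHeartbeats 400000 in
theorem smashMul_tmul (act : H →ₗ[k] Module.End k A) (a c : A) (h x : H)
    {n : ℕ} {h1 h2 : Fin n → H} (hc : Coalgebra.comul (R := k) h = ∑ i, h1 i ⊗ₜ[k] h2 i) :
    smashMul act (a ⊗ₜ[k] h) (c ⊗ₜ[k] x) = ∑ i, (a * act (h1 i) c) ⊗ₜ[k] (h2 i * x) := by
  simp only [smashMul, TensorProduct.curry_apply, LinearMap.coe_comp, LinearEquiv.coe_coe,
    Function.comp_apply, TensorProduct.assoc_tmul, TensorProduct.map_tmul, LinearMap.id_coe,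
    id_eq, TensorProduct.assoc_symm_tmul, smashHalf_tmul act c h hc, TensorProduct.sum_tmul,
    TensorProduct.tmul_sum, map_sum, TensorProduct.lift.tmul, LinearMap.mul'_apply]

set_option maxHeartbeats 1000000 in
set_option synthInstance.maxHeartbeats 400000 in
theorem coassoc_swap {B : Type} [Ring B] [Algebra k B]
    (f₁ : H →ₗ[k] B) (g : H →ₗ[k] H →ₗ[k] B)
    (h : H) {n : ℕ} {h1 h2 : Fin n → H}
    (hc : Coalgebra.comul (R := k) h = ∑ i, h1 i ⊗ₜ[k] h2 i)
    {m m' : Fin n → ℕ} {u : ∀ i, Fin (m i) → H} {v : ∀ i, Fin (m i) → H}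
    {p : ∀ i, Fin (m' i) → H} {q : ∀ i, Fin (m' i) → H}
    (hu : ∀ i, Coalgebra.comul (R := k) (h1 i) = ∑ l, u i l ⊗ₜ[k] v i l)
    (hp : ∀ i, Coalgebra.comul (R := k) (h2 i) = ∑ l, p i l ⊗ₜ[k] q i l) :
    ∑ i, ∑ l, f₁ (u i l) * g (v i l) (h2 i) = ∑ i, ∑ l, f₁ (h1 i) * g (p i l) (q i l) := by
  have key := congrArg ((LinearMap.mul' k B) ∘ₗ
    (TensorProduct.map f₁ (TensorProduct.lift g))) (Coalgebra.coassoc_apply (R := k) (A := H) h)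
  rw [hc] at key
  simpa [map_sum, hu, hp, TensorProduct.sum_tmul, TensorProduct.tmul_sum] using key

theorem counit_sum (h : H) {n : ℕ} {h1 h2 : Fin n → H}
    (hc : Coalgebra.comul (R := k) h = ∑ i, h1 i ⊗ₜ[k] h2 i) :
    ∑ i, Coalgebra.counit (R := k) (h2 i) • h1 i = h := by
  have key := congrArg (TensorProduct.rid k H) (Coalgebra.lTensor_counit_comul (R := k) h)
  rw [hc] at key
  simpa [map_sum] using key

theorem antipode_sum (h : H) {n : ℕ} {h1 h2 : Fin n → H}
    (hc : Coalgebra.comul (R := k) h = ∑ i, h1 i ⊗ₜ[k] h2 i) :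
    ∑ i, antipode (R := k) (h1 i) * h2 i
      = algebraMap k H (Coalgebra.counit (R := k) h) := by
  have key := HopfAlgebra.mul_antipode_rTensor_comul_apply (R := k) h
  rw [hc] at key
  simpa [map_sum] using key

theorem key_computation {B : Type} [Ring B] [Algebra k B]
    (act : H →ₗ[k] Module.End k A) (φ : A →ₐ[k] B) (π : H →ₗ[k] B)
    (hPR1 : π 1 = 1)
    (hPR3 : ∀ (h x : H) (n : ℕ) (h1 h2 : Fin n → H),
      Coalgebra.comul (R := k) h = ∑ i, h1 i ⊗ₜ[k] h2 i →
      (∑ i, π (h1 i) * π (antipode (R := k) (h2 i))) * π x =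
        ∑ i, π (h1 i) * π (antipode (R := k) (h2 i) * x))
    (hPR5 : ∀ (h x : H) (n : ℕ) (h1 h2 : Fin n → H),
      Coalgebra.comul (R := k) h = ∑ i, h1 i ⊗ₜ[k] h2 i →
      (∑ i, π (antipode (R := k) (h1 i)) * π (h2 i)) * π x =
        ∑ i, π (antipode (R := k) (h1 i)) * π (h2 i * x))
    (hCP1 : ∀ (h : H) (a : A) (n : ℕ) (h1 h2 : Fin n → H),
      Coalgebra.comul (R := k) h = ∑ i, h1 i ⊗ₜ[k] h2 i →
      φ (act h a) = ∑ i, π (h1 i) * φ a * π (antipode (R := k) (h2 i)))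
    (hCP2 : ∀ (h : H) (a : A) (n : ℕ) (h1 h2 : Fin n → H),
      Coalgebra.comul (R := k) h = ∑ i, h1 i ⊗ₜ[k] h2 i →
      φ a * ∑ i, π (antipode (R := k) (h1 i)) * π (h2 i) =
        (∑ i, π (antipode (R := k) (h1 i)) * π (h2 i)) * φ a)
    (a c : A) (h x : H) {n : ℕ} {h1 h2 : Fin n → H}
    (hc : Coalgebra.comul (R := k) h = ∑ i, h1 i ⊗ₜ[k] h2 i) :
    ∑ i, φ (a * act (h1 i) c) * π (h2 i * x) = (φ a * π h) * (φ c * π x) := by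
  choose m u v hu using fun i => comul_exists_repr (k := k) (h1 i)
  choose m' p q hp using fun i => comul_exists_repr (k := k) (h2 i)
  calc
    ∑ i, φ (a * act (h1 i) c) * π (h2 i * x)
        = ∑ i, ∑ l, (φ a * (π (u i l) * φ c)) * (π (antipode (R := k) (v i l)) * π (h2 i * x)) := by
          refine Finset.sum_congr rfl fun i _ => ?_
          rw [map_mul, hCP1 (h1 i) c (m i) (u i) (v i) (hu i)]
          simp only [Finset.mul_sum, Finset.sum_mul, mul_assoc]
    _ = ∑ i, ∑ l, (φ a * (π (h1 i) * φ c)) * (π (antipode (R := k) (p i l)) * π (q i l * x)) := by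
          exact coassoc_swap ((LinearMap.mulLeft k (φ a)) ∘ₗ (LinearMap.mulRight k (φ c)) ∘ₗ π)
            (((LinearMap.mul k B) ∘ₗ (π ∘ₗ antipode (R := k))).compl₂
              (π ∘ₗ LinearMap.mulRight k x)) h hc hu hp
    _ = ∑ i, (φ a * (π (h1 i) * φ c)) *
          ((∑ l, π (antipode (R := k) (p i l)) * π (q i l)) * π x) := by
          refine Finset.sum_congr rfl fun i _ => ?_
          rw [← Finset.mul_sum, ← hPR5 (h2 i) x (m' i) (p i) (q i) (hp i)]
    _ = ∑ i, ((φ a * π (h1 i)) *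
          ((∑ l, π (antipode (R := k) (p i l)) * π (q i l)) * (φ c * π x))) := by
          refine Finset.sum_congr rfl fun i _ => ?_
          have h2c := hCP2 (h2 i) c (m' i) (p i) (q i) (hp i)
          calc (φ a * (π (h1 i) * φ c)) *
              ((∑ l, π (antipode (R := k) (p i l)) * π (q i l)) * π x)
              = (φ a * π (h1 i)) *
                  ((φ c * ∑ l, π (antipode (R := k) (p i l)) * π (q i l)) * π x) := by
                simp only [mul_assoc]
            _ = (φ a * π (h1 i)) *
                  (((∑ l, π (antipode (R := k) (p i l)) * π (q i l)) * φ c) * π x) := by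
                rw [h2c]
            _ = (φ a * π (h1 i)) *
                  ((∑ l, π (antipode (R := k) (p i l)) * π (q i l)) * (φ c * π x)) := by
                simp only [mul_assoc]
    _ = (∑ i, ∑ l, (φ a * π (h1 i)) * (π (antipode (R := k) (p i l)) * π (q i l))) *
          (φ c * π x) := by
          simp only [Finset.sum_mul, Finset.mul_sum, mul_assoc]
    _ = (∑ i, ∑ l, (φ a * π (u i l)) * (π (antipode (R := k) (v i l)) * π (h2 i))) *
          (φ c * π x) := by
          exact congrArg (fun t => t * (φ c * π x))
            (coassoc_swap ((LinearMap.mulLeft k (φ a)) ∘ₗ π)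
              (((LinearMap.mul k B) ∘ₗ (π ∘ₗ antipode (R := k))).compl₂ π) h hc hu hp).symm
    _ = (∑ i, ∑ l, (φ a * π (u i l)) * π (antipode (R := k) (v i l) * h2 i)) * (φ c * π x) := by
          congr 1
          refine Finset.sum_congr rfl fun i _ => ?_
          have h3 := hPR3 (h1 i) (h2 i) (m i) (u i) (v i) (hu i)
          calc ∑ l, (φ a * π (u i l)) * (π (antipode (R := k) (v i l)) * π (h2 i))
              = φ a * ((∑ l, π (u i l) * π (antipode (R := k) (v i l))) * π (h2 i)) := by
                simp only [Finset.mul_sum, Finset.sum_mul, mul_assoc]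
            _ = φ a * (∑ l, π (u i l) * π (antipode (R := k) (v i l) * h2 i)) := by rw [h3]
            _ = ∑ l, (φ a * π (u i l)) * π (antipode (R := k) (v i l) * h2 i) := by
                simp only [Finset.mul_sum, mul_assoc]
    _ = (∑ i, ∑ l, (φ a * π (h1 i)) * π (antipode (R := k) (p i l) * q i l)) * (φ c * π x) := by
          exact congrArg (fun t => t * (φ c * π x))
            (coassoc_swap ((LinearMap.mulLeft k (φ a)) ∘ₗ π)
              (((LinearMap.mul k H) ∘ₗ (antipode (R := k))).compr₂ π) h hc hu hp)
    _ = (φ a * π h) * (φ c * π x) := by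
          congr 1
          calc ∑ i, ∑ l, (φ a * π (h1 i)) * π (antipode (R := k) (p i l) * q i l)
              = ∑ i, (φ a * π (h1 i)) * π (∑ l, antipode (R := k) (p i l) * q i l) := by
                simp only [map_sum, Finset.mul_sum]
            _ = ∑ i, (φ a * π (h1 i)) * π (algebraMap k H (Coalgebra.counit (R := k) (h2 i))) := by
                refine Finset.sum_congr rfl fun i _ => ?_
                rw [antipode_sum (h2 i) (hp i)]
            _ = ∑ i, Coalgebra.counit (R := k) (h2 i) • (φ a * π (h1 i)) := by
                refine Finset.sum_congr rfl fun i _ => ?_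
                rw [Algebra.algebraMap_eq_smul_one, map_smul, hPR1, mul_smul_comm, mul_one]
            _ = φ a * π (∑ i, Coalgebra.counit (R := k) (h2 i) • h1 i) := by
                simp only [map_sum, map_smul, Finset.mul_sum, mul_smul_comm]
            _ = φ a * π h := by rw [counit_sum h hc]

theorem comul_one_repr : Coalgebra.comul (R := k) (1 : H)
    = ∑ _i : Fin 1, (1 : H) ⊗ₜ[k] (1 : H) := by
  simp [Bialgebra.comul_one, Algebra.TensorProduct.one_def]

theorem smashMul_sharp (act : H →ₗ[k] Module.End k A) (hPA1 : ∀ a : A, act 1 a = a)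
    (a : A) (h : H) :
    smashMul act (sharp act a 1) (sharp act 1 h) = sharp act a h := by
  obtain ⟨n, h1, h2, hc⟩ := comul_exists_repr (k := k) h
  have e1 : sharp act a 1 = a ⊗ₜ[k] (1 : H) := by
    rw [sharp, smashMul_tmul act a 1 1 1 comul_one_repr]
    simp [hPA1]
  have e2 : sharp act 1 h = ∑ i, act (h1 i) 1 ⊗ₜ[k] h2 i := by
    rw [sharp, smashMul_tmul act 1 1 h 1 hc]; simp
  have e3 : sharp act a h = ∑ i, (a * act (h1 i) 1) ⊗ₜ[k] (h2 i) := by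
    rw [sharp, smashMul_tmul act a 1 h 1 hc]; simp
  rw [e1, e2, e3, map_sum]
  refine Finset.sum_congr rfl fun i _ => ?_
  rw [smashMul_tmul act a (act (h1 i) 1) 1 (h2 i) comul_one_repr]
  simp [hPA1]

end AuxUniversal

set_option maxHeartbeats 4000000 in
set_option synthInstance.maxHeartbeats 1000000 in
/-- Universal property of the partial smash product.  Given a covariant pair
`(φ, π)` with values in `B`, there is a unique algebra morphism `Φ` on the partial smash
product `A#H` (realized as the range `W` of right multiplication by `1_A ⊗ 1_H` inside
`A ⊗ H`) with `φ = Φ ∘ φ₀` and `π = Φ ∘ π₀`; explicitly `Φ(a#h) = φ(a)π(h)`. -/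
theorem smash_universal_property {B : Type} [Ring B] [Algebra k B]
    (act : H →ₗ[k] Module.End k A)
    -- symmetric partial action (PA1)-(PA4)
    (hPA1 : ∀ a : A, act 1 a = a)
    (hPA2 : ∀ (h : H) (a b : A) (n : ℕ) (h1 h2 : Fin n → H),
      Coalgebra.comul (R := k) h = ∑ i, h1 i ⊗ₜ[k] h2 i →
      act h (a * b) = ∑ i, act (h1 i) a * act (h2 i) b)
    (hPA3 : ∀ (h x : H) (a : A) (n : ℕ) (h1 h2 : Fin n → H),
      Coalgebra.comul (R := k) h = ∑ i, h1 i ⊗ₜ[k] h2 i →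
      act h (act x a) = ∑ i, act (h1 i) 1 * act (h2 i * x) a)
    (hPA4 : ∀ (h x : H) (a : A) (n : ℕ) (h1 h2 : Fin n → H),
      Coalgebra.comul (R := k) h = ∑ i, h1 i ⊗ₜ[k] h2 i →
      act h (act x a) = ∑ i, act (h1 i * x) a * act (h2 i) 1)
    -- the covariant pair
    (φ : A →ₐ[k] B) (π : H →ₗ[k] B) (hπ : IsPartialRep k π)
    -- (CP1)
    (hCP1 : ∀ (h : H) (a : A) (n : ℕ) (h1 h2 : Fin n → H),
      Coalgebra.comul (R := k) h = ∑ i, h1 i ⊗ₜ[k] h2 i →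
      φ (act h a) = ∑ i, π (h1 i) * φ a * π (antipode (R := k) (h2 i)))
    -- (CP2)
    (hCP2 : ∀ (h : H) (a : A) (n : ℕ) (h1 h2 : Fin n → H),
      Coalgebra.comul (R := k) h = ∑ i, h1 i ⊗ₜ[k] h2 i →
      φ a * ∑ i, π (antipode (R := k) (h1 i)) * π (h2 i) =
        (∑ i, π (antipode (R := k) (h1 i)) * π (h2 i)) * φ a) :
    (∃! Φ : ↥(LinearMap.range ((smashMul act).flip ((1 : A) ⊗ₜ[k] (1 : H)))) →ₗ[k] B,
      (∀ (x y : A ⊗[k] H)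
          (hx : x ∈ LinearMap.range ((smashMul act).flip ((1 : A) ⊗ₜ[k] (1 : H))))
          (hy : y ∈ LinearMap.range ((smashMul act).flip ((1 : A) ⊗ₜ[k] (1 : H))))
          (hxy : smashMul act x y ∈
            LinearMap.range ((smashMul act).flip ((1 : A) ⊗ₜ[k] (1 : H)))),
        Φ ⟨smashMul act x y, hxy⟩ = Φ ⟨x, hx⟩ * Φ ⟨y, hy⟩) ∧
      Φ ⟨sharp act 1 1, LinearMap.mem_range.mpr ⟨(1 : A) ⊗ₜ[k] (1 : H), rfl⟩⟩ = 1 ∧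
      (∀ a : A, Φ ⟨sharp act a 1, LinearMap.mem_range.mpr ⟨a ⊗ₜ[k] (1 : H), rfl⟩⟩ = φ a) ∧
      (∀ h : H, Φ ⟨sharp act 1 h, LinearMap.mem_range.mpr ⟨(1 : A) ⊗ₜ[k] h, rfl⟩⟩ = π h)) ∧
    (∀ Φ : ↥(LinearMap.range ((smashMul act).flip ((1 : A) ⊗ₜ[k] (1 : H)))) →ₗ[k] B,
      ((∀ (x y : A ⊗[k] H)
          (hx : x ∈ LinearMap.range ((smashMul act).flip ((1 : A) ⊗ₜ[k] (1 : H))))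
          (hy : y ∈ LinearMap.range ((smashMul act).flip ((1 : A) ⊗ₜ[k] (1 : H))))
          (hxy : smashMul act x y ∈
            LinearMap.range ((smashMul act).flip ((1 : A) ⊗ₜ[k] (1 : H)))),
        Φ ⟨smashMul act x y, hxy⟩ = Φ ⟨x, hx⟩ * Φ ⟨y, hy⟩) ∧
      Φ ⟨sharp act 1 1, LinearMap.mem_range.mpr ⟨(1 : A) ⊗ₜ[k] (1 : H), rfl⟩⟩ = 1 ∧
      (∀ a : A, Φ ⟨sharp act a 1, LinearMap.mem_range.mpr ⟨a ⊗ₜ[k] (1 : H), rfl⟩⟩ = φ a) ∧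
      (∀ h : H, Φ ⟨sharp act 1 h, LinearMap.mem_range.mpr ⟨(1 : A) ⊗ₜ[k] h, rfl⟩⟩ = π h)) →
      ∀ (a : A) (h : H),
        Φ ⟨sharp act a h, LinearMap.mem_range.mpr ⟨a ⊗ₜ[k] h, rfl⟩⟩ = φ a * π h) := by
  obtain ⟨hPR1, hPR2, hPR3, hPR4, hPR5⟩ := hπ
  set Ψ : A ⊗[k] H →ₗ[k] B :=
    TensorProduct.lift (((LinearMap.mul k B).compl₂ π) ∘ₗ φ.toLinearMap) with hΨ
  have Ψ_tmul : ∀ (a : A) (h : H), Ψ (a ⊗ₜ[k] h) = φ a * π h := fun a h => rfl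
  have Ψ_mul_tmul : ∀ (a c : A) (h x : H),
      Ψ (smashMul act (a ⊗ₜ[k] h) (c ⊗ₜ[k] x)) = Ψ (a ⊗ₜ[k] h) * Ψ (c ⊗ₜ[k] x) := by
    intro a c h x
    obtain ⟨n, h1, h2, hc⟩ := comul_exists_repr (k := k) h
    rw [smashMul_tmul act a c h x hc, map_sum]
    simp only [Ψ_tmul]
    exact key_computation act φ π hPR1 hPR3 hPR5 hCP1 hCP2 a c h x hc
  have Ψ_mul : ∀ w y : A ⊗[k] H, Ψ (smashMul act w y) = Ψ w * Ψ y := by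
    intro w y
    induction w using TensorProduct.induction_on with
    | zero => simp
    | tmul a h =>
      induction y using TensorProduct.induction_on with
      | zero => simp
      | tmul c x => exact Ψ_mul_tmul a c h x
      | add y1 y2 i1 i2 => simp only [map_add, i1, i2, mul_add]
    | add w1 w2 i1 i2 => simp only [map_add, LinearMap.add_apply, i1, i2, add_mul]
  have Ψ_sharp : ∀ (a : A) (h : H), Ψ (sharp act a h) = φ a * π h := by
    intro a h
    rw [sharp, Ψ_mul, Ψ_tmul, Ψ_tmul, map_one, hPR1, mul_one, mul_one]
  set W := LinearMap.range ((smashMul act).flip ((1 : A) ⊗ₜ[k] (1 : H))) with hW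
  set Φ : ↥W →ₗ[k] B := Ψ ∘ₗ W.subtype with hΦ
  have hΦ_apply : ∀ (x : A ⊗[k] H) (hx : x ∈ W), Φ ⟨x, hx⟩ = Ψ x := fun x hx => rfl
  have hProps : ∀ Φ' : ↥W →ₗ[k] B,
      ((∀ (x y : A ⊗[k] H) (hx : x ∈ W) (hy : y ∈ W)
          (hxy : smashMul act x y ∈ W),
        Φ' ⟨smashMul act x y, hxy⟩ = Φ' ⟨x, hx⟩ * Φ' ⟨y, hy⟩) ∧
      Φ' ⟨sharp act 1 1, LinearMap.mem_range.mpr ⟨(1 : A) ⊗ₜ[k] (1 : H), rfl⟩⟩ = 1 ∧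
      (∀ a : A, Φ' ⟨sharp act a 1, LinearMap.mem_range.mpr ⟨a ⊗ₜ[k] (1 : H), rfl⟩⟩ = φ a) ∧
      (∀ h : H, Φ' ⟨sharp act 1 h, LinearMap.mem_range.mpr ⟨(1 : A) ⊗ₜ[k] h, rfl⟩⟩ = π h)) →
      ∀ (a : A) (h : H),
        Φ' ⟨sharp act a h, LinearMap.mem_range.mpr ⟨a ⊗ₜ[k] h, rfl⟩⟩ = φ a * π h := by
    rintro Φ' ⟨hmul, -, hφ0, hπ0⟩ a h
    have key2 := smashMul_sharp act hPA1 a h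
    have hx : sharp act a 1 ∈ W := LinearMap.mem_range.mpr ⟨a ⊗ₜ[k] (1 : H), rfl⟩
    have hy : sharp act 1 h ∈ W := LinearMap.mem_range.mpr ⟨(1 : A) ⊗ₜ[k] h, rfl⟩
    have hxy : smashMul act (sharp act a 1) (sharp act 1 h) ∈ W := by
      rw [key2]; exact LinearMap.mem_range.mpr ⟨a ⊗ₜ[k] h, rfl⟩
    have heq : (⟨sharp act a h, LinearMap.mem_range.mpr ⟨a ⊗ₜ[k] h, rfl⟩⟩ : ↥W)
        = ⟨smashMul act (sharp act a 1) (sharp act 1 h), hxy⟩ := Subtype.ext key2.symm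
    rw [heq, hmul (sharp act a 1) (sharp act 1 h) hx hy hxy, hφ0 a, hπ0 h]
  have hΦP : (∀ (x y : A ⊗[k] H) (hx : x ∈ W) (hy : y ∈ W)
          (hxy : smashMul act x y ∈ W),
        Φ ⟨smashMul act x y, hxy⟩ = Φ ⟨x, hx⟩ * Φ ⟨y, hy⟩) ∧
      Φ ⟨sharp act 1 1, LinearMap.mem_range.mpr ⟨(1 : A) ⊗ₜ[k] (1 : H), rfl⟩⟩ = 1 ∧
      (∀ a : A, Φ ⟨sharp act a 1, LinearMap.mem_range.mpr ⟨a ⊗ₜ[k] (1 : H), rfl⟩⟩ = φ a) ∧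
      (∀ h : H, Φ ⟨sharp act 1 h, LinearMap.mem_range.mpr ⟨(1 : A) ⊗ₜ[k] h, rfl⟩⟩ = π h) := by
    refine ⟨fun x y hx hy hxy => ?_, ?_, fun a => ?_, fun h => ?_⟩
    · rw [hΦ_apply, hΦ_apply, hΦ_apply, Ψ_mul]
    · rw [hΦ_apply, Ψ_sharp, map_one, hPR1, mul_one]
    · rw [hΦ_apply, Ψ_sharp, hPR1, mul_one]
    · rw [hΦ_apply, Ψ_sharp, map_one, one_mul]
  constructor
  · refine ⟨Φ, hΦP, fun Φ' hP' => ?_⟩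
    have h2' := hProps Φ' hP'
    have h2 := hProps Φ hΦP
    have hsurj := LinearMap.surjective_rangeRestrict
      ((smashMul act).flip ((1 : A) ⊗ₜ[k] (1 : H)))
    refine LinearMap.ext fun w => ?_
    obtain ⟨z, rfl⟩ := hsurj w
    induction z using TensorProduct.induction_on with
    | zero => rw [map_zero, map_zero, map_zero]
    | tmul a h => exact (h2' a h).trans (h2 a h).symm
    | add z1 z2 i1 i2 => rw [map_add, map_add, map_add, i1, i2]
  · exact hProps
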